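/- Let (X, τ, E, I, I*, τ*) be an XEI-process and let κ be a cardinal such that the family E satisfies property (A_κ). Then for every family (A_α)_{α<κ} of pairwise disjoint subsets of X there exists α < κ such that A_α has no accumulation points in the topology τ*. -/

import Mathlib

open Set Filter TopologicalSpace

universe u

/-- An ideal of subsets of `X`: closed under subsets and finite unions,
contains `∅` and does not contain `X` itself. -/
def IsSetIdeal {X : Type u} (I : Set (Set X)) : Prop :=
  (∀ S ∈ I, ∀ T : Set X, T ⊆ S → T ∈ I) ∧ (∀ S ∈ I, ∀ T ∈ I, S ∪ T ∈ I) ∧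
    (∅ : Set X) ∈ I ∧ (univ : Set X) ∉ I

/-- An XEI-process `(X, τ, E, I, I*, τ*)`. -/
structure XEIProcess (X : Type u) where
  /-- the topology `τ` -/
  tau : TopologicalSpace X
  /-- the family `E` -/
  E : Set (Set X)
  /-- the ideal `I` -/
  I : Set (Set X)
  /-- the ideal `I*` -/
  Istar : Set (Set X)
  /-- the topology `τ*` -/
  taustar : TopologicalSpace X
  /-- (b) members of `E` are nonempty -/
  E_nonempty : ∀ K ∈ E, K.Nonempty
  /-- (b) `E ⊇ τ \ {∅}` -/
  open_mem_E : ∀ U : Set X, tau.IsOpen U → U.Nonempty → U ∈ E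
  /-- (c) `K ∩ U ∈ E ∪ {∅}` for `K ∈ E`, `U ∈ τ` -/
  E_inter_open : ∀ K ∈ E, ∀ U : Set X, tau.IsOpen U → K ∩ U ∈ E ∨ K ∩ U = ∅
  /-- (d) `I` is an ideal on `X` -/
  I_ideal : IsSetIdeal I
  /-- (d) `I ⊇ [X]^{<ω}` -/
  finite_mem_I : ∀ S : Set X, S.Finite → S ∈ I
  /-- (d) `I ∩ E = ∅` -/
  I_disjoint_E : I ∩ E = ∅
  /-- (e) `I* ⊇ I` -/
  I_subset_Istar : I ⊆ Istar
  /-- (e) `I*` is an ideal on `X` -/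
  Istar_ideal : IsSetIdeal Istar
  /-- (e) `I* ∩ E = ∅` -/
  Istar_disjoint_E : Istar ∩ E = ∅
  /-- (e) `I*` is maximal among ideals disjoint from `E` -/
  Istar_maximal : ∀ J : Set (Set X), IsSetIdeal J → J ∩ E = ∅ → Istar ⊆ J → J = Istar
  /-- (f) `τ*` is the topology with base `{U \ S : U ∈ τ, S ∈ I*}` -/
  taustar_eq : taustar = TopologicalSpace.generateFrom
    {V : Set X | ∃ (U S : Set X), tau.IsOpen U ∧ S ∈ Istar ∧ V = U \ S}

/-- The property (A_κ): among any `κ` many members of the family there are two distinct ones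
whose intersection contains a member of the family. -/
def PropertyA {X : Type u} (E : Set (Set X)) (κ : Cardinal.{u}) : Prop :=
  ∀ H ⊆ E, Cardinal.mk H = κ → ∃ K ∈ H, ∃ L ∈ H, K ≠ L ∧ ∃ M ∈ E, M ⊆ K ∩ L

/-- Lemma 4(2): if `E` satisfies (A_κ), then among `κ` many pairwise disjoint subsets of `X`,
some set has no accumulation points in `τ*`. -/

lemma xei_key {X : Type u} [Nonempty X] (P : XEIProcess X) {T : Set X} (hT : T ∉ P.Istar) :
    ∃ K ∈ P.E, ∃ S ∈ P.Istar, K ⊆ T ∪ S := by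
  set J : Set (Set X) := {Z | ∃ S ∈ P.Istar, Z ⊆ T ∪ S} with hJdef
  by_cases hE : ∃ K ∈ P.E, K ∈ J
  · obtain ⟨K, hK, S, hS, hsub⟩ := hE
    exact ⟨K, hK, S, hS, hsub⟩
  · push_neg at hE
    by_cases huniv : (univ : Set X) ∈ J
    · obtain ⟨S, hS, hsub⟩ := huniv
      exact ⟨univ, P.open_mem_E univ P.tau.isOpen_univ univ_nonempty, S, hS,
        fun x _ => hsub (mem_univ x)⟩
    · exfalso
      have hIdeal : IsSetIdeal J := by
        refine ⟨?_, ?_, ⟨∅, P.Istar_ideal.2.2.1, empty_subset _⟩, huniv⟩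
        · rintro Z ⟨S, hS, hsub⟩ W hW
          exact ⟨S, hS, hW.trans hsub⟩
        · rintro Z ⟨S, hS, hsub⟩ W ⟨S', hS', hsub'⟩
          refine ⟨S ∪ S', P.Istar_ideal.2.1 S hS S' hS', union_subset ?_ ?_⟩
          · exact hsub.trans (union_subset_union_right T subset_union_left)
          · exact hsub'.trans (union_subset_union_right T subset_union_right)
      have hdisjE : J ∩ P.E = ∅ := by
        ext Z
        simp only [mem_inter_iff, mem_empty_iff_false, iff_false, not_and]
        exact fun hZ hZE => hE Z hZE hZ
      have hsub : P.Istar ⊆ J := fun Z hZ => ⟨Z, hZ, subset_union_right⟩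
      have := P.Istar_maximal J hIdeal hdisjE hsub
      have hTJ : T ∈ J := ⟨∅, P.Istar_ideal.2.2.1, by simp⟩
      rw [this] at hTJ
      exact hT hTJ

theorem stmt_6 {X : Type u} (P : XEIProcess X) (κ : Cardinal.{u})
    (hA : PropertyA P.E κ) (ι : Type u) (hι : Cardinal.mk ι = κ) (A : ι → Set X)
    (hdisj : Pairwise (Function.onFun Disjoint A)) :
    ∃ i : ι, ∀ x : X, ¬ @AccPt X P.taustar x (𝓟 (A i)) := by
  by_contra h
  push_neg at h
  have hne : Nonempty ι := by
    by_contra hni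
    rw [not_nonempty_iff] at hni
    have h0 : Cardinal.mk ((∅ : Set (Set X)) : Set (Set X)) = κ := by
      rw [← hι]
      simp [Cardinal.mk_eq_zero]
    obtain ⟨K, hK, -⟩ := hA ∅ (empty_subset _) h0
    exact hK
  obtain ⟨i0⟩ := hne
  obtain ⟨x0, -⟩ := h i0
  have : Nonempty X := ⟨x0⟩
  -- choose accumulation points
  choose x hx using h
  -- the sets A i \ {x i} are not in Istar
  have hT : ∀ i, A i \ {x i} ∉ P.Istar := by
    intro i hTi
    have hopen' : P.taustar.IsOpen (univ \ (A i \ {x i})) := by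
      rw [P.taustar_eq]
      exact TopologicalSpace.GenerateOpen.basic _
        ⟨univ, A i \ {x i}, P.tau.isOpen_univ, hTi, rfl⟩
    letI := P.taustar
    have hopen : IsOpen (univ \ (A i \ {x i})) := hopen'
    have hxm : x i ∈ univ \ (A i \ {x i}) := by simp
    have hnh : univ \ (A i \ {x i}) ∈ nhds (x i) := hopen.mem_nhds hxm
    obtain ⟨y, ⟨hyU, hyA⟩, hyx⟩ := accPt_iff_nhds.mp (hx i) _ hnh
    exact hyU.2 ⟨hyA, hyx⟩
  have key := fun i => xei_key P (hT i)
  choose K hKE S hSI hKsub using key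
  have hKA : ∀ i, K i ⊆ A i ∪ S i := fun i =>
    (hKsub i).trans (union_subset_union_left _ diff_subset)
  -- if i ≠ j then K i ∩ K j ∈ Istar-small
  have hsmall : ∀ i j, i ≠ j → K i ∩ K j ⊆ S i ∪ S j := by
    intro i j hij z hz
    rcases hKA i hz.1 with h1 | h1
    · rcases hKA j hz.2 with h2 | h2
      · exact absurd h2 (Set.disjoint_left.mp (hdisj hij) h1)
      · exact Or.inr h2
    · exact Or.inl h1
  have hinj : Function.Injective K := by
    intro i j hij
    by_contra hne
    have h1 : K i ⊆ S i ∪ S j := by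
      intro z hz
      exact hsmall i j hne ⟨hz, hij ▸ hz⟩
    have h2 : K i ∈ P.Istar :=
      P.Istar_ideal.1 _ (P.Istar_ideal.2.1 _ (hSI i) _ (hSI j)) _ h1
    have : K i ∈ P.Istar ∩ P.E := ⟨h2, hKE i⟩
    rw [P.Istar_disjoint_E] at this
    exact this
  have hHsub : range K ⊆ P.E := by
    rintro - ⟨i, rfl⟩
    exact hKE i
  have hHcard : Cardinal.mk (range K) = κ := by
    rw [Cardinal.mk_range_eq K hinj, hι]
  obtain ⟨K1, hK1, L, hL, hKL, M, hME, hMsub⟩ := hA (range K) hHsub hHcard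
  obtain ⟨i, rfl⟩ := hK1
  obtain ⟨j, rfl⟩ := hL
  have hij : i ≠ j := fun h => hKL (h ▸ rfl)
  have hM : M ⊆ S i ∪ S j := hMsub.trans (hsmall i j hij)
  have hMI : M ∈ P.Istar :=
    P.Istar_ideal.1 _ (P.Istar_ideal.2.1 _ (hSI i) _ (hSI j)) _ hM
  have : M ∈ P.Istar ∩ P.E := ⟨hMI, hME⟩
  rw [P.Istar_disjoint_E] at this
  exact this
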